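/- Let n ≥ 2, for an integer h ≥ 1 let K_h = conv(([-1,1]^{n-1} × {0}) ∪ {h e_n, -h e_n}) ⊆ ℝ^n, and let t = (1/2, …, 1/2, 0)ᵀ ∈ ℝ^n. Then lim_{h → ∞} #(K_h + t) / #(K_h) = 2^{n-2}. -/

import Mathlib

open scoped BigOperators

/-- The lattice point enumerator: the number of integer points in `A ⊆ ℝ^n`. -/
noncomputable def latCount {n : ℕ} (A : Set (Fin n → ℝ)) : ℕ :=
  (A ∩ {x : Fin n → ℝ | ∀ i, ∃ z : ℤ, x i = (z : ℝ)}).ncard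

/-- The cube `[-1,1]^{n-1} × {0}` in the hyperplane `eₙ^⊥ ⊆ ℝ^n`. -/
def cubeSlice (n : ℕ) : Set (Fin n → ℝ) :=
  {x | (∀ i : Fin n, (i : ℕ) < n - 1 → |x i| ≤ 1) ∧ ∀ i : Fin n, (i : ℕ) = n - 1 → x i = 0}

/-- The apex `h·eₙ`. -/
def apexVec (n h : ℕ) : Fin n → ℝ := fun i => if (i : ℕ) = n - 1 then (h : ℝ) else 0

/-- The double pyramid `K_h = conv(([-1,1]^{n-1} × {0}) ∪ {± h eₙ})`. -/
noncomputable def Kh (n h : ℕ) : Set (Fin n → ℝ) :=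
  convexHull ℝ (cubeSlice n ∪ {apexVec n h, -apexVec n h})

/-- The translation vector `t = (1/2, …, 1/2, 0)`. -/
noncomputable def tvec (n : ℕ) : Fin n → ℝ := fun i => if (i : ℕ) = n - 1 then 0 else 1 / 2

section Aux

open Set Filter

lemma ncard_univ_pi' {ι : Type*} [Fintype ι] {α : ι → Type*} (s : ∀ i, Set (α i)) :
    (Set.univ.pi s).ncard = ∏ i, (s i).ncard := by
  rw [← Nat.card_coe_set_eq]
  have e : ↥(Set.univ.pi s) ≃ ∀ i, ↥(s i) :=
    { toFun := fun x i => ⟨x.1 i, x.2 i (Set.mem_univ i)⟩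
      invFun := fun f => ⟨fun i => (f i).1, fun i _ => (f i).2⟩
      left_inv := fun x => rfl
      right_inv := fun f => rfl }
  rw [Nat.card_congr e, Nat.card_pi]
  simp [Nat.card_coe_set_eq]

lemma ncard01' : ({0, 1} : Set ℝ).ncard = 2 := by
  rw [Set.ncard_insert_of_notMem (by norm_num) (Set.finite_singleton _), Set.ncard_singleton]

lemma ncard101' : ({-1, 0, 1} : Set ℝ).ncard = 3 := by
  rw [Set.ncard_insert_of_notMem (by norm_num) ((Set.finite_singleton _).insert _)]
  rw [ncard01']

def Zs (h : ℕ) : Set ℝ := (fun z : ℤ => (z : ℝ)) '' {z : ℤ | z ≠ 0 ∧ -(h:ℤ) ≤ z ∧ z ≤ (h:ℤ)}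
def Ws (h : ℕ) : Set ℝ := (fun z : ℤ => (z : ℝ)) '' {z : ℤ | -(h:ℤ) ≤ 2*z ∧ 2*z ≤ (h:ℤ)}

lemma Zs_int_eq (h : ℕ) : {z : ℤ | z ≠ 0 ∧ -(h:ℤ) ≤ z ∧ z ≤ (h:ℤ)} =
    ↑((Finset.Icc (-(h:ℤ)) (h:ℤ)).erase 0) := by
  ext z; simp [Finset.mem_erase, Finset.mem_Icc]; tauto

lemma Ws_int_eq (h : ℕ) : {z : ℤ | -(h:ℤ) ≤ 2*z ∧ 2*z ≤ (h:ℤ)} =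
    ↑(Finset.Icc (-((h/2 : ℕ):ℤ)) (((h/2 : ℕ)):ℤ)) := by
  ext z; simp only [Set.mem_setOf_eq, Finset.coe_Icc, Set.mem_Icc]; omega

lemma Zs_finite (h : ℕ) : (Zs h).Finite := by
  rw [Zs, Zs_int_eq]; exact (((Finset.Icc _ _).erase 0).finite_toSet).image _

lemma Ws_finite (h : ℕ) : (Ws h).Finite := by
  rw [Ws, Ws_int_eq]; exact ((Finset.Icc _ _).finite_toSet).image _

lemma Zs_ncard (h : ℕ) (hh : 1 ≤ h) : (Zs h).ncard = 2 * h := by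
  rw [Zs, Set.ncard_image_of_injective _ Int.cast_injective, Zs_int_eq, Set.ncard_coe_finset,
    Finset.card_erase_of_mem (by simp [Finset.mem_Icc]), Int.card_Icc]
  omega

lemma Ws_ncard (h : ℕ) : (Ws h).ncard = 2 * (h / 2) + 1 := by
  rw [Ws, Set.ncard_image_of_injective _ Int.cast_injective, Ws_int_eq, Set.ncard_coe_finset,
    Int.card_Icc]
  omega

def Pset (m h : ℕ) : Set (Fin (m + 2) → ℝ) :=
  {x | |x (Fin.last (m + 1))| ≤ (h : ℝ) ∧
    ∀ i, i ≠ Fin.last (m + 1) → (h : ℝ) * |x i| + |x (Fin.last (m + 1))| ≤ (h : ℝ)}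

def Λ (n : ℕ) : Set (Fin n → ℝ) := {x : Fin n → ℝ | ∀ i, ∃ z : ℤ, x i = (z : ℝ)}

def f0 (m : ℕ) : Fin (m+2) → Set ℝ := fun i => if i = Fin.last (m+1) then {0} else {-1, 0, 1}
def f1 (m h : ℕ) : Fin (m+2) → Set ℝ := fun i => if i = Fin.last (m+1) then Zs h else {0}
def g0 (m h : ℕ) : Fin (m+2) → Set ℝ := fun i => if i = Fin.last (m+1) then Ws h else {0, 1}

lemma ne_last_iff {m : ℕ} (i : Fin (m + 2)) : i ≠ Fin.last (m + 1) ↔ (i : ℕ) < m + 1 := by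
  rw [Ne, Fin.ext_iff, Fin.val_last]
  have := i.isLt
  omega

lemma apex_last (m h : ℕ) : apexVec (m + 2) h (Fin.last (m + 1)) = (h : ℝ) := if_pos rfl

lemma apex_ne_last (m h : ℕ) (i : Fin (m + 2)) (hi : i ≠ Fin.last (m + 1)) :
    apexVec (m + 2) h i = 0 :=
  if_neg (by have := (ne_last_iff i).mp hi; omega)

lemma tvec_last (m : ℕ) : tvec (m+2) (Fin.last (m+1)) = 0 := if_pos rfl

lemma tvec_ne_last (m : ℕ) (i : Fin (m+2)) (hi : i ≠ Fin.last (m+1)) : tvec (m+2) i = 1/2 :=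
  if_neg (by have := (ne_last_iff i).mp hi; omega)

lemma mem_image_add_iff {n : ℕ} (S : Set (Fin n → ℝ)) (t x : Fin n → ℝ) :
    x ∈ (fun y => y + t) '' S ↔ x - t ∈ S := by
  constructor
  · rintro ⟨y, hy, rfl⟩; simpa using hy
  · intro hx; exact ⟨x - t, hx, by simp⟩

lemma convex_Pset (m h : ℕ) : Convex ℝ (Pset m h) := by
  intro x hx y hy a b ha hb hab
  obtain ⟨hx1, hx2⟩ := hx
  obtain ⟨hy1, hy2⟩ := hy
  constructor
  · calc |(a • x + b • y) (Fin.last (m+1))| = |a * x (Fin.last (m+1)) + b * y (Fin.last (m+1))| := rfl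
      _ ≤ |a * x (Fin.last (m+1))| + |b * y (Fin.last (m+1))| := abs_add_le _ _
      _ = a * |x (Fin.last (m+1))| + b * |y (Fin.last (m+1))| := by
          rw [abs_mul, abs_mul, abs_of_nonneg ha, abs_of_nonneg hb]
      _ ≤ a * h + b * h := by gcongr
      _ = h := by rw [← add_mul, hab, one_mul]
  · intro i hi
    have h1 := hx2 i hi
    have h2 := hy2 i hi
    have e1 : |(a • x + b • y) i| ≤ a * |x i| + b * |y i| := by
      calc |(a • x + b • y) i| = |a * x i + b * y i| := rfl
        _ ≤ |a * x i| + |b * y i| := abs_add_le _ _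
        _ = a * |x i| + b * |y i| := by
            rw [abs_mul, abs_mul, abs_of_nonneg ha, abs_of_nonneg hb]
    have e2 : |(a • x + b • y) (Fin.last (m+1))| ≤ a * |x (Fin.last (m+1))| + b * |y (Fin.last (m+1))| := by
      calc |(a • x + b • y) (Fin.last (m+1))| = |a * x (Fin.last (m+1)) + b * y (Fin.last (m+1))| := rfl
        _ ≤ |a * x (Fin.last (m+1))| + |b * y (Fin.last (m+1))| := abs_add_le _ _
        _ = _ := by rw [abs_mul, abs_mul, abs_of_nonneg ha, abs_of_nonneg hb]
    nlinarith [abs_nonneg (x i), abs_nonneg (y i)]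

lemma Kh_eq (m h : ℕ) (hh : 1 ≤ h) : Kh (m + 2) h = Pset m h := by
  have hL : ((m:ℕ) + 2) - 1 = m + 1 := by omega
  have hhR : (1:ℝ) ≤ (h:ℝ) := by exact_mod_cast hh
  have hhR0 : (0:ℝ) < (h:ℝ) := by linarith
  apply le_antisymm
  · apply convexHull_min _ (convex_Pset m h)
    rintro x (hx | hx)
    · obtain ⟨hx1, hx2⟩ := hx
      have hxL : x (Fin.last (m+1)) = 0 := hx2 _ rfl
      refine ⟨by rw [hxL]; simp [le_of_lt hhR0], fun i hi => ?_⟩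
      rw [hxL, abs_zero, add_zero]
      have : |x i| ≤ 1 := hx1 i (by rw [hL]; exact (ne_last_iff i).mp hi)
      nlinarith
    · have key : ∀ (v : Fin (m+2) → ℝ), (v = apexVec (m+2) h ∨ v = -apexVec (m+2) h) → v ∈ Pset m h := by
        rintro v (rfl | rfl)
        · refine ⟨by rw [apex_last]; rw [abs_of_nonneg hhR0.le], fun i hi => ?_⟩
          rw [apex_ne_last m h i hi, apex_last, abs_zero, mul_zero, zero_add,
            abs_of_nonneg hhR0.le]
        · refine ⟨by rw [Pi.neg_apply, apex_last, abs_neg, abs_of_nonneg hhR0.le], fun i hi => ?_⟩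
          rw [Pi.neg_apply, Pi.neg_apply, apex_ne_last m h i hi, apex_last, neg_zero, abs_zero,
            mul_zero, zero_add, abs_neg, abs_of_nonneg hhR0.le]
      rcases hx with rfl | hx
      · exact key _ (Or.inl rfl)
      · simp only [Set.mem_singleton_iff] at hx
        exact key _ (Or.inr hx)
  · intro x hx
    obtain ⟨hx1, hx2⟩ := hx
    set L : Fin (m+2) := Fin.last (m+1) with hLdef
    set s : ℝ := x L with hs
    have hcc : Convex ℝ (Kh (m+2) h) := convex_convexHull ℝ _
    have hsub : cubeSlice (m+2) ∪ {apexVec (m+2) h, -apexVec (m+2) h} ⊆ Kh (m+2) h :=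
      subset_convexHull ℝ _
    have hapex : apexVec (m+2) h ∈ Kh (m+2) h := hsub (Or.inr (Or.inl rfl))
    have hapex' : -apexVec (m+2) h ∈ Kh (m+2) h := hsub (Or.inr (Or.inr rfl))
    have main : ∀ (v : Fin (m+2) → ℝ), v ∈ Kh (m+2) h → v L = (if 0 ≤ s then (h:ℝ) else -(h:ℝ)) →
        (∀ i, i ≠ L → v i = 0) → x ∈ Kh (m+2) h := by
      intro v hv hvL hvi
      set a : ℝ := |s| / h with ha
      have ha0 : 0 ≤ a := div_nonneg (abs_nonneg _) hhR0.le
      have ha1 : a ≤ 1 := by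
        rw [ha, div_le_one hhR0]; exact hx1
      by_cases hcase : a = 1
      · have hsabs : |s| = h := by
          rw [ha, div_eq_one_iff_eq hhR0.ne'] at hcase; linarith [hcase]
        have hxv : x = v := by
          funext i
          by_cases hi : i = L
          · subst hi
            rw [hvL, ← hs]
            rcases abs_cases s with ⟨h1, h2⟩ | ⟨h1, h2⟩
            · rw [if_pos h2]; linarith
            · rw [if_neg (by linarith : ¬ (0:ℝ) ≤ s)]; linarith
          · have hc := hx2 i hi
            rw [hsabs] at hc
            have : (h:ℝ) * |x i| ≤ 0 := by linarith
            have hxi0 : |x i| = 0 := le_antisymm (by nlinarith) (abs_nonneg _)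
            rw [abs_eq_zero] at hxi0
            rw [hxi0, hvi i hi]
        rw [hxv]; exact hv
      · have ha1' : a < 1 := lt_of_le_of_ne ha1 hcase
        set q : Fin (m+2) → ℝ := fun i => if i = L then 0 else x i / (1 - a) with hq
        have hqmem : q ∈ cubeSlice (m+2) := by
          constructor
          · intro i hi
            have hiL : i ≠ L := by rw [hLdef, ne_last_iff]; omega
            simp only [hq, if_neg hiL]
            rw [abs_div, abs_of_nonneg (by linarith : (0:ℝ) ≤ 1 - a), div_le_one (by linarith)]
            have hc := hx2 i hiL
            have haeq : a * h = |s| := by rw [ha]; field_simp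
            nlinarith
          · intro i hi
            have hiL : i = L := by
              rw [hLdef, Fin.ext_iff, Fin.val_last]; omega
            simp [hq, hiL]
        have hxeq : x = (1 - a) • q + a • v := by
          funext i
          by_cases hi : i = L
          · subst hi
            simp only [hq, Pi.add_apply, Pi.smul_apply, if_pos rfl, if_true, smul_eq_mul, mul_zero, zero_add]
            rw [hvL, ha, ← hs]
            rcases abs_cases s with ⟨h1, h2⟩ | ⟨h1, h2⟩
            · rw [if_pos h2, h1, div_mul_cancel₀ _ hhR0.ne']
            · rw [if_neg (by linarith : ¬ (0:ℝ) ≤ s), h1]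
              have : -s / (h:ℝ) * -(h:ℝ) = s := by field_simp
              linarith
          · simp only [hq, Pi.add_apply, Pi.smul_apply, if_neg hi, smul_eq_mul, hvi i hi, mul_zero,
              add_zero]
            rw [mul_comm, div_mul_cancel₀ _ (by linarith : (1:ℝ) - a ≠ 0)]
        rw [hxeq]
        exact hcc (hsub (Or.inl hqmem)) hv (by linarith) ha0 (by ring)
    by_cases hss : 0 ≤ s
    · exact main _ hapex (by rw [apex_last, if_pos hss]) (fun i hi => apex_ne_last m h i hi)
    · exact main _ hapex' (by rw [Pi.neg_apply, apex_last, if_neg hss])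
        (fun i hi => by rw [Pi.neg_apply, apex_ne_last m h i hi, neg_zero])

lemma latP (m h : ℕ) (hh : 1 ≤ h) :
    Pset m h ∩ Λ (m+2) = Set.univ.pi (f0 m) ∪ Set.univ.pi (f1 m h) := by
  have hhR : (1:ℝ) ≤ (h:ℝ) := by exact_mod_cast hh
  set L : Fin (m+2) := Fin.last (m+1) with hLdef
  ext x
  constructor
  · rintro ⟨⟨hx1, hx2⟩, hlat⟩
    obtain ⟨z, hz⟩ := hlat L
    by_cases hz0 : z = 0
    · left
      intro i _
      by_cases hi : i = L
      · subst hi; simp only [f0, ← hLdef, if_pos rfl, if_true]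
        rw [Set.mem_singleton_iff, hz, hz0, Int.cast_zero]
      · simp only [f0, ← hLdef, if_neg hi]
        obtain ⟨w, hw⟩ := hlat i
        have hc := hx2 i hi
        rw [hz, hz0, Int.cast_zero, abs_zero, add_zero, hw] at hc
        have h1 : |(w:ℝ)| ≤ 1 := by nlinarith [abs_nonneg ((w:ℝ))]
        have h2 : |w| ≤ 1 := by exact_mod_cast (by push_cast; exact h1 : ((|w|:ℤ):ℝ) ≤ 1)
        have : w = -1 ∨ w = 0 ∨ w = 1 := by rw [abs_le] at h2; omega
        rcases this with rfl | rfl | rfl <;> simp [hw]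
    · right
      intro i _
      by_cases hi : i = L
      · subst hi; simp only [f1, ← hLdef, if_pos rfl, if_true]
        refine ⟨z, ⟨hz0, ?_⟩, hz.symm⟩
        have : |(z:ℝ)| ≤ h := hz ▸ hx1
        have : |z| ≤ (h:ℤ) := by exact_mod_cast (by push_cast; exact this : ((|z|:ℤ):ℝ) ≤ h)
        rw [abs_le] at this; exact ⟨by omega, by omega⟩
      · simp only [f1, ← hLdef, if_neg hi]
        obtain ⟨w, hw⟩ := hlat i
        have hc := hx2 i hi
        have hz1 : (1:ℝ) ≤ |(z:ℝ)| := by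
          have : (1:ℤ) ≤ |z| := Int.one_le_abs (by omega)
          calc (1:ℝ) = ((1:ℤ):ℝ) := by norm_num
            _ ≤ ((|z|:ℤ):ℝ) := by exact_mod_cast this
            _ = |(z:ℝ)| := by push_cast; ring
        rw [hz, hw] at hc
        by_contra hwne
        have hw0 : w ≠ 0 := by
          intro hc2; apply hwne; rw [hw, hc2]; simp
        have hw1 : (1:ℝ) ≤ |(w:ℝ)| := by
          have : (1:ℤ) ≤ |w| := Int.one_le_abs (by omega)
          calc (1:ℝ) = ((1:ℤ):ℝ) := by norm_num
            _ ≤ ((|w|:ℤ):ℝ) := by exact_mod_cast this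
            _ = |(w:ℝ)| := by push_cast; ring
        nlinarith
  · rintro (hx | hx)
    · have hxL : x L = 0 := by
        have := hx L (Set.mem_univ L); simpa [f0, ← hLdef] using this
      have hxi : ∀ i, i ≠ L → x i ∈ ({-1, 0, 1} : Set ℝ) := by
        intro i hi; have := hx i (Set.mem_univ i); simpa [f0, ← hLdef, if_neg hi] using this
      refine ⟨⟨by rw [hxL]; simp, fun i hi => ?_⟩, fun i => ?_⟩
      · rw [hxL, abs_zero, add_zero]
        rcases hxi i hi with h | h | h <;> rw [h] <;> simp
      · by_cases hi : i = L
        · exact ⟨0, by rw [hi, hxL]; simp⟩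
        · rcases hxi i hi with h | h | h
          · exact ⟨-1, by rw [h]; push_cast; ring⟩
          · exact ⟨0, by rw [h]; simp⟩
          · exact ⟨1, by rw [h]; simp⟩
    · have hxL : x L ∈ Zs h := by
        have := hx L (Set.mem_univ L); simpa [f1, ← hLdef] using this
      have hxi : ∀ i, i ≠ L → x i = 0 := by
        intro i hi; have := hx i (Set.mem_univ i); simpa [f1, ← hLdef, if_neg hi] using this
      obtain ⟨z, ⟨hz0, hz1, hz2⟩, hzx⟩ := hxL
      have habs : |x L| ≤ (h:ℝ) := by
        rw [← hzx]
        have : |z| ≤ (h:ℤ) := abs_le.mpr ⟨by omega, by omega⟩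
        calc |(z:ℝ)| = ((|z|:ℤ):ℝ) := by push_cast; ring
          _ ≤ ((h:ℤ):ℝ) := by exact_mod_cast this
          _ = (h:ℝ) := by push_cast; ring
      refine ⟨⟨habs, fun i hi => ?_⟩, fun i => ?_⟩
      · rw [hxi i hi, abs_zero, mul_zero, zero_add]; exact habs
      · by_cases hi : i = L
        · exact ⟨z, by rw [hi, ← hzx]⟩
        · exact ⟨0, by rw [hxi i hi]; simp⟩

lemma latPT (m h : ℕ) (hh : 1 ≤ h) :
    ((fun y => y + tvec (m+2)) '' Pset m h) ∩ Λ (m+2) = Set.univ.pi (g0 m h) := by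
  have hhR : (1:ℝ) ≤ (h:ℝ) := by exact_mod_cast hh
  set L : Fin (m+2) := Fin.last (m+1) with hLdef
  ext x
  rw [Set.mem_inter_iff, mem_image_add_iff]
  constructor
  · rintro ⟨⟨hx1, hx2⟩, hlat⟩
    have hsubL : (x - tvec (m+2)) L = x L := by
      simp [hLdef, tvec_last m]
    have hsubi : ∀ i, i ≠ L → (x - tvec (m+2)) i = x i - 1/2 := by
      intro i hi; simp [tvec_ne_last m i hi]
    rw [hsubL] at hx1 hx2
    obtain ⟨z, hz⟩ := hlat L
    intro i _
    by_cases hi : i = L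
    · subst hi
      simp only [g0, ← hLdef, if_pos rfl, if_true]
      refine ⟨z, ?_, hz.symm⟩
      have hne : (Fin.mk 0 (by omega) : Fin (m+2)) ≠ L := by
        rw [hLdef, Ne, Fin.ext_iff, Fin.val_last]; simp
      obtain ⟨w, hw⟩ := hlat ⟨0, by omega⟩
      have hc := hx2 _ hne
      rw [hsubi _ hne, hw, hz] at hc
      have hwabs : (1:ℝ)/2 ≤ |(w:ℝ) - 1/2| := by
        rcases le_or_gt (w:ℤ) 0 with hcase | hcase
        · have : (w:ℝ) ≤ 0 := by exact_mod_cast hcase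
          rw [abs_of_nonpos (by linarith)]; linarith
        · have : (1:ℝ) ≤ (w:ℝ) := by exact_mod_cast hcase
          rw [abs_of_nonneg (by linarith)]; linarith
      have h2z : 2 * |(z:ℝ)| ≤ h := by nlinarith [abs_nonneg ((z:ℝ) )]
      have : 2 * |z| ≤ (h:ℤ) := by
        exact_mod_cast (by push_cast; exact h2z : ((2 * |z| : ℤ):ℝ) ≤ (h:ℝ))
      rcases abs_cases z with ⟨he, _⟩ | ⟨he, _⟩ <;> constructor <;> omega
    · simp only [g0, ← hLdef, if_neg hi]
      obtain ⟨w, hw⟩ := hlat i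
      have hc := hx2 i hi
      rw [hsubi i hi, hw, hz] at hc
      have hw01 : w = 0 ∨ w = 1 := by
        by_contra hcon
        push_neg at hcon
        have : (3:ℝ)/2 ≤ |(w:ℝ) - 1/2| := by
          rcases le_or_gt (w:ℤ) 0 with hcase | hcase
          · have hcase' : (w:ℤ) ≤ -1 := by omega
            have : (w:ℝ) ≤ -1 := by exact_mod_cast hcase'
            rw [abs_of_nonpos (by linarith)]; linarith
          · have hcase' : (2:ℤ) ≤ w := by omega
            have : (2:ℝ) ≤ (w:ℝ) := by exact_mod_cast hcase'
            rw [abs_of_nonneg (by linarith)]; linarith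
        nlinarith [abs_nonneg ((z:ℝ))]
      rcases hw01 with rfl | rfl <;> simp [hw]
  · intro hx
    have hxL : x L ∈ Ws h := by
      have := hx L (Set.mem_univ L); simpa [g0, ← hLdef] using this
    have hxi : ∀ i, i ≠ L → x i ∈ ({0,1} : Set ℝ) := by
      intro i hi; have := hx i (Set.mem_univ i); simpa [g0, ← hLdef, if_neg hi] using this
    obtain ⟨z, ⟨hz1, hz2⟩, hzx⟩ := hxL
    have habs : 2 * |x L| ≤ (h:ℝ) := by
      rw [← hzx]
      have h1 : 2 * |z| ≤ (h:ℤ) := by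
        rcases abs_cases z with ⟨he, _⟩ | ⟨he, _⟩ <;> omega
      calc 2 * |(z:ℝ)| = ((2 * |z| :ℤ):ℝ) := by push_cast; ring
        _ ≤ ((h:ℤ):ℝ) := by exact_mod_cast h1
        _ = (h:ℝ) := by norm_num
    constructor
    · constructor
      · have : (0:ℝ) ≤ |x L| := abs_nonneg _
        calc |(x - tvec (m+2)) L| = |x L| := by simp [hLdef, tvec_last m]
          _ ≤ (h:ℝ) := by linarith
      · intro i hi
        have hii : (x - tvec (m+2)) i = x i - 1/2 := by simp [tvec_ne_last m i hi]
        have hLL : |(x - tvec (m+2)) L| = |x L| := by simp [hLdef, tvec_last m]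
        rw [hii, hLL]
        have : |x i - 1/2| = 1/2 := by
          rcases hxi i hi with he | he <;> rw [he] <;> norm_num
        rw [this]
        linarith
    · intro i
      by_cases hi : i = L
      · exact ⟨z, by rw [hi, ← hzx]⟩
      · rcases hxi i hi with he | he
        · exact ⟨0, by rw [he]; simp⟩
        · exact ⟨1, by rw [he]; simp⟩

lemma prod_ncard (m : ℕ) (F : Fin (m+2) → Set ℝ) (aL : ℕ) (aO : ℕ)
    (hL : (F (Fin.last (m+1))).ncard = aL)
    (hO : ∀ i, i ≠ Fin.last (m+1) → (F i).ncard = aO) :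
    ∏ i, (F i).ncard = aL * aO^(m+1) := by
  rw [← Finset.mul_prod_erase Finset.univ _ (Finset.mem_univ (Fin.last (m+1))), hL]
  congr 1
  rw [Finset.prod_congr rfl (fun i hi => hO i (Finset.mem_erase.mp hi).1), Finset.prod_const,
    Finset.card_erase_of_mem (Finset.mem_univ _), Finset.card_univ, Fintype.card_fin]
  norm_num

lemma fin_f0 (m : ℕ) : ∀ i, ((f0 m) i).Finite := by
  intro i
  by_cases hi : i = Fin.last (m+1)
  · rw [f0, if_pos hi]; exact Set.finite_singleton _
  · rw [f0, if_neg hi]; exact ((Set.finite_singleton _).insert _).insert _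

lemma fin_f1 (m h : ℕ) : ∀ i, ((f1 m h) i).Finite := by
  intro i
  by_cases hi : i = Fin.last (m+1)
  · rw [f1, if_pos hi]; exact Zs_finite h
  · rw [f1, if_neg hi]; exact Set.finite_singleton _

lemma count_Kh (m h : ℕ) (hh : 1 ≤ h) : latCount (Kh (m+2) h) = 3^(m+1) + 2*h := by
  show ((Kh (m+2) h) ∩ Λ (m+2)).ncard = _
  rw [Kh_eq m h hh, latP m h hh]
  have hdisj : Disjoint (Set.univ.pi (f0 m)) (Set.univ.pi (f1 m h)) := by
    rw [Set.disjoint_left]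
    intro x h0 h1
    have e0 := h0 (Fin.last (m+1)) (Set.mem_univ _)
    have e1 := h1 (Fin.last (m+1)) (Set.mem_univ _)
    simp only [f0, f1, if_pos rfl, if_true] at e0 e1
    obtain ⟨z, ⟨hz0, _, _⟩, hzx⟩ := e1
    rw [Set.mem_singleton_iff] at e0
    rw [e0] at hzx
    exact hz0 (by exact_mod_cast show ((z:ℝ) = 0) from hzx)
  rw [Set.ncard_union_eq hdisj (Set.Finite.pi (fin_f0 m)) (Set.Finite.pi (fin_f1 m h)),
    ncard_univ_pi', ncard_univ_pi',
    prod_ncard m (f0 m) 1 3 (by rw [f0, if_pos rfl]; exact Set.ncard_singleton _)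
      (fun i hi => by rw [f0, if_neg hi]; exact ncard101'),
    prod_ncard m (f1 m h) (2*h) 1 (by rw [f1, if_pos rfl]; exact Zs_ncard h hh)
      (fun i hi => by rw [f1, if_neg hi]; exact Set.ncard_singleton _)]
  ring

lemma count_KhT (m h : ℕ) (hh : 1 ≤ h) :
    latCount ((fun x => x + tvec (m+2)) '' Kh (m+2) h) = (2*(h/2)+1) * 2^(m+1) := by
  show (((fun x => x + tvec (m+2)) '' Kh (m+2) h) ∩ Λ (m+2)).ncard = _
  rw [Kh_eq m h hh, latPT m h hh, ncard_univ_pi',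
    prod_ncard m (g0 m h) (2*(h/2)+1) 2 (by rw [g0, if_pos rfl]; exact Ws_ncard h)
      (fun i hi => by rw [g0, if_neg hi]; exact ncard01')]

lemma limit_lemma (m : ℕ) :
    Tendsto (fun h : ℕ => ((2:ℝ)^(m+1) * (2*((h/2 : ℕ):ℝ)+1)) / ((3:ℝ)^(m+1) + 2*(h:ℝ)))
      atTop (nhds ((2:ℝ)^m)) := by
  set c : ℝ := (3:ℝ)^(m+1) with hc
  have hc0 : 0 < c := by positivity
  have base : Tendsto (fun h : ℕ => c/(h:ℝ) + 2) atTop (nhds 2) := by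
    have h1 := tendsto_const_div_atTop_nhds_zero_nat c
    have := h1.add (tendsto_const_nhds (x := (2:ℝ)))
    simpa using this
  have base1 : Tendsto (fun h : ℕ => 1 + 1/(h:ℝ)) atTop (nhds 1) := by
    have h1 := tendsto_const_div_atTop_nhds_zero_nat (1:ℝ)
    have := (tendsto_const_nhds (x := (1:ℝ))).add h1
    simpa using this
  have hlo : Tendsto (fun h : ℕ => (2:ℝ)^(m+1) * (h:ℝ) / (c + 2*(h:ℝ))) atTop (nhds ((2:ℝ)^m)) := by
    have key : Tendsto (fun h : ℕ => (2:ℝ)^(m+1) / (c/(h:ℝ) + 2)) atTop (nhds ((2:ℝ)^(m+1)/2)) :=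
      tendsto_const_nhds.div base (by norm_num)
    have heq : (fun h : ℕ => (2:ℝ)^(m+1) / (c/(h:ℝ) + 2)) =ᶠ[atTop]
        (fun h : ℕ => (2:ℝ)^(m+1) * (h:ℝ) / (c + 2*(h:ℝ))) := by
      filter_upwards [eventually_ge_atTop 1] with h hh
      have hh0 : (0:ℝ) < (h:ℝ) := by exact_mod_cast hh
      field_simp
    have := key.congr' heq
    convert this using 2
    rw [pow_succ]; ring
  have hhi : Tendsto (fun h : ℕ => (2:ℝ)^(m+1) * ((h:ℝ)+1) / (c + 2*(h:ℝ))) atTop (nhds ((2:ℝ)^m)) := by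
    have key : Tendsto (fun h : ℕ => (2:ℝ)^(m+1) * (1 + 1/(h:ℝ)) / (c/(h:ℝ) + 2)) atTop
        (nhds ((2:ℝ)^(m+1) * 1 / 2)) :=
      (tendsto_const_nhds.mul base1).div base (by norm_num)
    have heq : (fun h : ℕ => (2:ℝ)^(m+1) * (1 + 1/(h:ℝ)) / (c/(h:ℝ) + 2)) =ᶠ[atTop]
        (fun h : ℕ => (2:ℝ)^(m+1) * ((h:ℝ)+1) / (c + 2*(h:ℝ))) := by
      filter_upwards [eventually_ge_atTop 1] with h hh
      have hh0 : (0:ℝ) < (h:ℝ) := by exact_mod_cast hh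
      field_simp
    have := key.congr' heq
    convert this using 2
    rw [pow_succ]; ring
  apply tendsto_of_tendsto_of_tendsto_of_le_of_le' hlo hhi
  · filter_upwards [eventually_ge_atTop 1] with h hh
    have hd : (0:ℝ) < c + 2*(h:ℝ) := by positivity
    have hnum : (h:ℝ) ≤ 2*((h/2 : ℕ):ℝ)+1 := by
      have : h ≤ 2*(h/2)+1 := by omega
      exact_mod_cast this
    gcongr
  · filter_upwards [eventually_ge_atTop 1] with h hh
    have hd : (0:ℝ) < c + 2*(h:ℝ) := by positivity
    have hnum : 2*((h/2 : ℕ):ℝ)+1 ≤ (h:ℝ)+1 := by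
      have : 2*(h/2)+1 ≤ h+1 := by omega
      exact_mod_cast this
    gcongr

end Aux

/-- For the double pyramids `K_h` and `t = (1/2, …, 1/2, 0)` one has
`#(K_h + t)/#(K_h) → 2^{n-2}` as `h → ∞`. -/
theorem translated_double_pyramid (n : ℕ) (hn : 2 ≤ n) :
    Filter.Tendsto
      (fun h : ℕ => (latCount ((fun x => x + tvec n) '' Kh n h) : ℝ) / (latCount (Kh n h) : ℝ))
      Filter.atTop (nhds ((2 : ℝ) ^ (n - 2))) := by
  obtain ⟨m, rfl⟩ : ∃ m, n = m + 2 := ⟨n - 2, by omega⟩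
  have hval : (2:ℝ) ^ (m + 2 - 2) = 2 ^ m := by norm_num
  rw [hval]
  apply Filter.Tendsto.congr' _ (limit_lemma m)
  filter_upwards [Filter.eventually_ge_atTop 1] with h hh
  rw [count_Kh m h hh, count_KhT m h hh]
  push_cast
  ring
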